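/- arXiv:2508.16102 — 2 statements merged into one kernel-verified Lean document; each statement's English description precedes it below -/
import Mathlib

section
/- Let d ≥ 1 be an integer, γ ∈ ℝ_{>0} ∖ {1}, α ∈ (0,1], r > 2, and j ∈ ℤ. Let E ⊆ ℝ have bounded α-Assouad characteristic and let 𝓔_j be a maximally 2^{-γj}-separated subset of E. Define 𝓚_r(t,s) = (1 + 2^{γj}|t−s|)^{−d(1/2 − 1/r)}. (i) If d(1/2 − 1/r) > α/s for some s ∈ [1,∞), then sup_{τ' ∈ 𝓔_j} ‖𝓚_r(·, τ')‖_{ℓ^s_τ(𝓔_j)} ≤ C [E]_α^{1/s} and sup_{τ ∈ 𝓔_j} ‖𝓚_r(τ, ·)‖_{ℓ^s_{τ'}(𝓔_j)} ≤ C [E]_α^{1/s}, with C independent of j. (ii) If d(1/2 − 1/r) = α/s, then the corresponding bounds hold with the weak-ℓ^{s,∞} quasinorm in place of the ℓ^s norm, with C independent of j. -/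
open MeasureTheory Complex Set Metric
open scoped ENNReal NNReal Classical

noncomputable section

/-- The Fourier transform of `f` on `ℝ^d`. -/
def ftransform {d : ℕ} (f : EuclideanSpace ℝ (Fin d) → ℂ) (ξ : EuclideanSpace ℝ (Fin d)) : ℂ :=
  ∫ x, Complex.exp (-(Complex.I * ((inner ℝ x ξ : ℝ) : ℂ))) * f x

/-- The fractional Schrödinger propagator `U^γ_t f`. -/
def Uprop (d : ℕ) (γ t : ℝ) (f : EuclideanSpace ℝ (Fin d) → ℂ)
    (x : EuclideanSpace ℝ (Fin d)) : ℂ :=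
  (((2 * Real.pi) ^ (-(d : ℝ)) : ℝ) : ℂ) *
    ∫ ξ, Complex.exp (Complex.I * (((inner ℝ x ξ : ℝ) + t * ‖ξ‖ ^ γ : ℝ) : ℂ)) * ftransform f ξ

/-- `U^γ_t P_j f`, the propagator applied to the Littlewood–Paley piece `P_j f`,
where `P_j f = (ψ(2^{-j}|·|) f̂)^∨`. -/
def UpropLP (d : ℕ) (γ : ℝ) (ψ : ℝ → ℝ) (j : ℤ) (t : ℝ) (f : EuclideanSpace ℝ (Fin d) → ℂ)
    (x : EuclideanSpace ℝ (Fin d)) : ℂ :=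
  (((2 * Real.pi) ^ (-(d : ℝ)) : ℝ) : ℂ) *
    ∫ ξ, Complex.exp (Complex.I * (((inner ℝ x ξ : ℝ) + t * ‖ξ‖ ^ γ : ℝ) : ℂ)) *
      ((ψ ((2:ℝ) ^ (-j) * ‖ξ‖) : ℝ) : ℂ) * ftransform f ξ

/-- `U^γ_t P_{≤ 0} f`, where `P_{≤0} = Id - ∑_{j ≥ 1} P_j`. -/
def UpropLPle0 (d : ℕ) (γ : ℝ) (ψ : ℝ → ℝ) (t : ℝ) (f : EuclideanSpace ℝ (Fin d) → ℂ)
    (x : EuclideanSpace ℝ (Fin d)) : ℂ :=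
  (((2 * Real.pi) ^ (-(d : ℝ)) : ℝ) : ℂ) *
    ∫ ξ, Complex.exp (Complex.I * (((inner ℝ x ξ : ℝ) + t * ‖ξ‖ ^ γ : ℝ) : ℂ)) *
      (((1 - ∑' n : ℕ, ψ ((2:ℝ) ^ (-((n : ℤ) + 1)) * ‖ξ‖)) : ℝ) : ℂ) * ftransform f ξ

/-- The operator `T_{t,s} = U^γ_t P_j (U^γ_s P_j)^*`, given by its explicit kernel formula. -/
def Tkernel (d : ℕ) (γ : ℝ) (ψ : ℝ → ℝ) (j : ℤ) (t s : ℝ)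
    (g : EuclideanSpace ℝ (Fin d) → ℂ) (x : EuclideanSpace ℝ (Fin d)) : ℂ :=
  (((2 * Real.pi) ^ (-(d : ℝ)) : ℝ) : ℂ) *
    ∫ ξ, Complex.exp (Complex.I * (((inner ℝ x ξ : ℝ) + (t - s) * ‖ξ‖ ^ γ : ℝ) : ℂ)) *
      (((ψ ((2:ℝ) ^ (-j) * ‖ξ‖)) ^ 2 : ℝ) : ℂ) * ftransform g ξ

/-- The mixed norm `‖F‖_{L^q_t(μ; L^r_x(ν))}`. -/
def mixedNorm {d : ℕ} (q r : ℝ≥0∞) (μ : Measure ℝ)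
    (ν : Measure (EuclideanSpace ℝ (Fin d)))
    (F : ℝ → EuclideanSpace ℝ (Fin d) → ℂ) : ℝ≥0∞ :=
  if q = ∞ then essSup (fun t => eLpNorm (F t) r ν) μ
  else (∫⁻ t, eLpNorm (F t) r ν ^ q.toReal ∂μ) ^ (1 / q.toReal)

/-- The inhomogeneous Sobolev norm `‖f‖_{H^s}`. -/
def sobolevNorm {d : ℕ} (s : ℝ) (f : EuclideanSpace ℝ (Fin d) → ℂ) : ℝ :=
  Real.sqrt (∫ ξ, (1 + ‖ξ‖ ^ 2) ^ s * ‖ftransform f ξ‖ ^ 2)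

/-- The homogeneous Sobolev norm `‖f‖_{Ḣ^s}`. -/
def homSobolevNorm {d : ℕ} (s : ℝ) (f : EuclideanSpace ℝ (Fin d) → ℂ) : ℝ :=
  Real.sqrt (∫ ξ, ‖ξ‖ ^ (2 * s) * ‖ftransform f ξ‖ ^ 2)

/-- `N(E, δ)`: the minimal number of (closed) intervals of length `δ` needed to cover `E`
(`∞` if no finite cover exists). -/
def coverNum (E : Set ℝ) (δ : ℝ) : ℝ≥0∞ :=
  ⨅ (S : Finset ℝ) (_ : E ⊆ ⋃ c ∈ S, Set.Icc c (c + δ)), (S.card : ℝ≥0∞)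

/-- The (global) `α`-Assouad characteristic `[E]_α`. -/
def assouadChar (α : ℝ) (E : Set ℝ) : ℝ≥0∞ :=
  ⨆ (δ : ℝ) (_ : 0 < δ) (a : ℝ) (b : ℝ) (_ : δ ≤ b - a),
    ENNReal.ofReal ((δ / (b - a)) ^ α) * coverNum (E ∩ Set.Icc a b) δ

/-- The `(α, θ)`-Assouad characteristic `[E]_{α,θ}`, where the supremum is taken over
intervals `I ⊆ [0,1]`. -/
def assouadCharSpec (α θ : ℝ) (E : Set ℝ) : ℝ≥0∞ :=
  ⨆ (a : ℝ) (b : ℝ) (_ : a < b) (_ : Set.Icc a b ⊆ Set.Icc (0:ℝ) 1),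
    ENNReal.ofReal (((b - a) ^ (1 / θ) / (b - a)) ^ α) *
      coverNum (E ∩ Set.Icc a b) ((b - a) ^ (1 / θ))

/-- `⟨μ⟩_α`: the best constant in the `α`-dimensional growth condition
`μ((t-ρ, t+ρ)) ≤ C ρ^α`. -/
def growthConst (α : ℝ) (μ : Measure ℝ) : ℝ≥0∞ :=
  ⨆ (t : ℝ) (ρ : ℝ) (_ : 0 < ρ), μ (Set.Ioo (t - ρ) (t + ρ)) / ENNReal.ofReal (ρ ^ α)

/-- The `ℓ^q` norm of a family indexed by a set `S ⊆ ℝ`. -/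
def lqNorm (q : ℝ≥0∞) (S : Set ℝ) (a : ℝ → ℝ≥0∞) : ℝ≥0∞ :=
  if q = ∞ then ⨆ τ ∈ S, a τ
  else (∑' τ : S, a τ ^ q.toReal) ^ (1 / q.toReal)

/-- The weak `ℓ^{s,∞}` quasinorm of a family indexed by a set `S ⊆ ℝ`. -/
def weakLqNorm (s : ℝ) (S : Set ℝ) (a : ℝ → ℝ≥0∞) : ℝ≥0∞ :=
  ⨆ (l : ℝ) (_ : 0 < l),
    ENNReal.ofReal l * (({τ ∈ S | ENNReal.ofReal l < a τ}.encard : ℝ≥0∞)) ^ (1 / s)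

/-- The conjugate exponent, with exponents recorded in `ℝ≥0∞`. -/
def conjExp (p : ℝ≥0∞) : ℝ≥0∞ := ENNReal.ofReal ((1 - (p⁻¹).toReal)⁻¹)

/-- `S` is a `δ`-separated subset of `E`. -/
def IsSepSubset (δ : ℝ) (S E : Set ℝ) : Prop :=
  S ⊆ E ∧ ∀ τ ∈ S, ∀ τ' ∈ S, τ ≠ τ' → δ ≤ |τ - τ'|

/-- `S` is a maximally `δ`-separated subset of `E`. -/
def IsMaxSepSubset (δ : ℝ) (S E : Set ℝ) : Prop :=
  IsSepSubset δ S E ∧ ∀ t ∈ E, ∃ τ ∈ S, |t - τ| ≤ δ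

/-- The indicator `χ_k` of the dyadic region `2^{k-1} < 2^{γj}|t-s| ≤ 2^k` (for `k ≥ 1`),
resp. `2^{γj}|t-s| ≤ 1` (for `k = 0`). -/
def chiK (γ : ℝ) (j : ℤ) (k : ℕ) (t s : ℝ) : ℝ :=
  if k = 0 then (if (2:ℝ) ^ (γ * j) * |t - s| ≤ 1 then 1 else 0)
  else (if (2:ℝ) ^ ((k:ℝ) - 1) < (2:ℝ) ^ (γ * j) * |t - s| ∧
      (2:ℝ) ^ (γ * j) * |t - s| ≤ (2:ℝ) ^ (k:ℝ) then 1 else 0)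


-- two δ-separated points max in an interval of length δ
lemma aux_two_sep {δ : ℝ} (hδ : 0 < δ) (S : Set ℝ)
    (hsep : ∀ τ ∈ S, ∀ τ' ∈ S, τ ≠ τ' → δ ≤ |τ - τ'|) (c : ℝ) :
    (S ∩ Set.Icc c (c + δ)).encard ≤ 2 := by
  by_contra hlt
  push_neg at hlt
  have h3 : (3:ℕ∞) ≤ (S ∩ Set.Icc c (c + δ)).encard := Order.add_one_le_of_lt hlt
  obtain ⟨t, hts, ht3⟩ := Set.exists_subset_encard_eq h3
  rw [Set.encard_eq_three] at ht3
  obtain ⟨x, y, z, hxy, hxz, hyz, rfl⟩ := ht3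
  have hx := hts (show x ∈ ({x,y,z}:Set ℝ) by simp)
  have hy := hts (show y ∈ ({x,y,z}:Set ℝ) by simp)
  have hz := hts (show z ∈ ({x,y,z}:Set ℝ) by simp)
  have ep : ∀ u v : ℝ, u ∈ S ∩ Set.Icc c (c+δ) → v ∈ S ∩ Set.Icc c (c+δ) → u ≠ v →
      (u = c ∨ u = c + δ) := by
    intro u v hu hv huv
    have h1 := hsep u hu.1 v hv.1 huv
    have hu2 := hu.2; have hv2 := hv.2
    simp only [Set.mem_Icc] at hu2 hv2
    rcases abs_cases (u - v) with ⟨he, _⟩ | ⟨he, _⟩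
    · right; linarith
    · left; linarith
  have hx' := ep x y hx hy hxy
  have hy' := ep y x hy hx (Ne.symm hxy)
  have hz' := ep z x hz hx (fun h => hxz h.symm)
  rcases hx' with h1 | h1 <;> rcases hy' with h2 | h2 <;> rcases hz' with h3 | h3 <;>
    simp_all

lemma aux_encard_biUnion_le (S' : Finset ℝ) (g : ℝ → Set ℝ) :
    (⋃ c ∈ S', g c).encard ≤ ∑ c ∈ S', (g c).encard := by
  classical
  induction S' using Finset.induction_on with
  | empty => simp
  | insert _ _ hnotmem ih =>
    rename_i a s
    rw [Finset.set_biUnion_insert, Finset.sum_insert hnotmem]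
    exact le_trans (Set.encard_union_le _ _) (add_le_add le_rfl ih)

lemma aux_count (α : ℝ) (hα0 : 0 < α) (E : Set ℝ) (hEA : assouadChar α E ≠ ∞)
    (δ a b : ℝ) (hδ : 0 < δ) (hab : δ ≤ b - a) (S : Set ℝ) (hsub : S ⊆ E)
    (hsep : ∀ τ ∈ S, ∀ τ' ∈ S, τ ≠ τ' → δ ≤ |τ - τ'|) :
    ((S ∩ Set.Icc a b).encard : ℝ≥0∞) ≤
      4 * ENNReal.ofReal (((b - a) / δ) ^ α) * assouadChar α E := by
  have hba : 0 < b - a := lt_of_lt_of_le hδ hab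
  set x : ℝ≥0∞ := ENNReal.ofReal ((δ / (b - a)) ^ α) with hxdef
  have hxpos : (0:ℝ) < (δ / (b - a)) ^ α := Real.rpow_pos_of_pos (div_pos hδ hba) α
  have hx0 : x ≠ 0 := by rw [hxdef]; exact (ENNReal.ofReal_pos.mpr hxpos).ne'
  have hxtop : x ≠ ∞ := ENNReal.ofReal_ne_top
  set N := coverNum (E ∩ Set.Icc a b) δ with hNdef
  have key : x * N ≤ assouadChar α E := by
    rw [assouadChar]
    refine le_iSup_of_le δ ?_
    refine le_iSup_of_le hδ ?_
    refine le_iSup_of_le a ?_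
    refine le_iSup_of_le b ?_
    exact le_iSup_of_le hab le_rfl
  have hxinv : x⁻¹ = ENNReal.ofReal (((b - a) / δ) ^ α) := by
    rw [hxdef, ← ENNReal.ofReal_inv_of_pos hxpos]
    congr 1
    rw [← Real.inv_rpow (div_pos hδ hba).le, inv_div]
  have hNle : N ≤ ENNReal.ofReal (((b - a) / δ) ^ α) * assouadChar α E := by
    rw [← hxinv]
    calc N = x⁻¹ * (x * N) := by
            rw [← mul_assoc, ENNReal.inv_mul_cancel hx0 hxtop, one_mul]
      _ ≤ x⁻¹ * assouadChar α E := mul_le_mul_right key _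
  rcases (S ∩ Set.Icc a b).eq_empty_or_nonempty with he | hne
  · simp [he]
  · have hEI : (E ∩ Set.Icc a b).Nonempty :=
      hne.mono (Set.inter_subset_inter hsub (subset_refl _))
    have hN1 : 1 ≤ N := by
      rw [hNdef, coverNum]
      refine le_iInf fun S' => le_iInf fun hcov => ?_
      obtain ⟨p, hp⟩ := hEI
      have hmem := hcov hp
      simp only [Set.mem_iUnion] at hmem
      obtain ⟨c, hcS', _⟩ := hmem
      have hpos : 0 < S'.card := Finset.card_pos.mpr ⟨c, hcS'⟩
      exact_mod_cast Nat.one_le_iff_ne_zero.mpr hpos.ne'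
    have hNtop : N ≠ ∞ := by
      intro h
      rw [h, top_le_iff] at hNle
      exact ENNReal.mul_ne_top ENNReal.ofReal_ne_top hEA hNle
    have hlt2 : coverNum (E ∩ Set.Icc a b) δ < N + 1 := by
      rw [← hNdef]; exact ENNReal.lt_add_right hNtop one_ne_zero
    rw [coverNum] at hlt2
    obtain ⟨S', hS'⟩ := iInf_lt_iff.mp hlt2
    obtain ⟨hcov, hcard⟩ := iInf_lt_iff.mp hS'
    have hsubU : S ∩ Set.Icc a b ⊆ ⋃ c ∈ S', (S ∩ Set.Icc c (c + δ)) := by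
      intro τ hτ
      have hm : τ ∈ ⋃ c ∈ S', Set.Icc c (c + δ) := hcov ⟨hsub hτ.1, hτ.2⟩
      simp only [Set.mem_iUnion] at hm ⊢
      obtain ⟨c, hcS, hτc⟩ := hm
      exact ⟨c, hcS, hτ.1, hτc⟩
    have hcount : (S ∩ Set.Icc a b).encard ≤ 2 * S'.card := by
      refine le_trans (Set.encard_mono hsubU)
        (le_trans (aux_encard_biUnion_le S' _) ?_)
      calc ∑ c ∈ S', (S ∩ Set.Icc c (c + δ)).encard
          ≤ ∑ _c ∈ S', 2 := Finset.sum_le_sum (fun c _ => aux_two_sep hδ S hsep c)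
        _ = 2 * S'.card := by rw [Finset.sum_const, nsmul_eq_mul, mul_comm]
    calc ((S ∩ Set.Icc a b).encard : ℝ≥0∞)
        ≤ ((2 * (S'.card : ℕ∞) : ℕ∞) : ℝ≥0∞) := by exact_mod_cast hcount
      _ = 2 * (S'.card : ℝ≥0∞) := by simp [ENat.toENNReal_mul]
      _ ≤ 2 * (N + 1) := by gcongr
      _ ≤ 2 * (N + N) := by gcongr
      _ = 4 * N := by ring
      _ ≤ 4 * (ENNReal.ofReal (((b - a) / δ) ^ α) * assouadChar α E) := by gcongr
      _ = 4 * ENNReal.ofReal (((b - a) / δ) ^ α) * assouadChar α E := by ring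

lemma aux_strong (α s β : ℝ) (hα0 : 0 < α) (hα1 : α ≤ 1) (hs : 1 ≤ s) (hβ0 : 0 < β)
    (hβs : α < β * s) (E : Set ℝ) (hEA : assouadChar α E ≠ ∞) :
    ∃ M : ℝ≥0∞, M ≠ ∞ ∧ ∀ (δ : ℝ), 0 < δ → ∀ (Ej : Set ℝ), Ej ⊆ E →
      (∀ τ ∈ Ej, ∀ τ' ∈ Ej, τ ≠ τ' → δ ≤ |τ - τ'|) → ∀ σ : ℝ,
      ∑' τ : Ej, (ENNReal.ofReal ((1 + δ⁻¹ * |(τ:ℝ) - σ|) ^ (-β))) ^ s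
        ≤ M * assouadChar α E := by
  have hβspos : 0 < β * s := by nlinarith
  set q : ℝ≥0∞ := ENNReal.ofReal ((2:ℝ) ^ (α - β*s)) with hqdef
  set q2 : ℝ≥0∞ := ENNReal.ofReal ((2:ℝ) ^ (-(β*s))) with hq2def
  set c : ℝ≥0∞ := ENNReal.ofReal ((2:ℝ) ^ (β*s)) with hcdef
  set C2 : ℝ≥0∞ := ENNReal.ofReal ((2:ℝ) ^ α) with hC2def
  have hq1 : q < 1 := by
    rw [hqdef]
    exact ENNReal.ofReal_lt_one.mpr
      (Real.rpow_lt_one_of_one_lt_of_neg one_lt_two (by linarith))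
  have h1q : (1 - q)⁻¹ ≠ ∞ := by
    rw [ENNReal.inv_ne_top]
    intro h
    exact absurd (tsub_eq_zero_iff_le.mp h) (not_le.mpr hq1)
  refine ⟨4 * c * C2 * (1 - q)⁻¹, ?_, ?_⟩
  · exact ENNReal.mul_ne_top (ENNReal.mul_ne_top
      (ENNReal.mul_ne_top (by norm_num) ENNReal.ofReal_ne_top) ENNReal.ofReal_ne_top) h1q
  intro δ hδ Ej hEjE hsep σ
  have hex : ∀ τ : ℝ, ∃ k : ℕ, δ⁻¹ * |τ - σ| ≤ 2 ^ k := by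
    intro τ
    obtain ⟨k, hk⟩ := pow_unbounded_of_one_lt (δ⁻¹ * |τ - σ|) one_lt_two
    exact ⟨k, hk.le⟩
  set G : ℕ → Set ℝ := fun k => {τ : ℝ | Nat.find (hex τ) = k} with hGdef
  -- pointwise bound
  have hpt : ∀ τ : ℝ, (ENNReal.ofReal ((1 + δ⁻¹ * |τ - σ|) ^ (-β))) ^ s
      ≤ ∑' k : ℕ, (c * q2 ^ k) * (G k).indicator (fun _ => (1:ℝ≥0∞)) τ := by
    intro τ
    have hτG : τ ∈ G (Nat.find (hex τ)) := rfl
    refine le_trans ?_ (ENNReal.le_tsum (Nat.find (hex τ)))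
    rw [Set.indicator_of_mem hτG, mul_one]
    have hu0 : 0 ≤ δ⁻¹ * |τ - σ| := by positivity
    have hv0 : (0:ℝ) < 1 + δ⁻¹ * |τ - σ| := by linarith
    have hv1 : (1:ℝ) ≤ 1 + δ⁻¹ * |τ - σ| := by linarith
    rw [ENNReal.ofReal_rpow_of_pos (Real.rpow_pos_of_pos hv0 _)]
    rw [hcdef, hq2def, ← ENNReal.ofReal_pow (by positivity), ← ENNReal.ofReal_mul (by positivity)]
    apply ENNReal.ofReal_le_ofReal
    have hLHS : ((1 + δ⁻¹ * |τ - σ|) ^ (-β)) ^ s = (1 + δ⁻¹ * |τ - σ|) ^ (-(β*s)) := by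
      rw [← Real.rpow_mul hv0.le]
      ring_nf
    rw [hLHS]
    rcases Nat.eq_zero_or_pos (Nat.find (hex τ)) with h0 | hposk
    · rw [h0, pow_zero, mul_one]
      calc (1 + δ⁻¹ * |τ - σ|) ^ (-(β*s)) ≤ 1 :=
            Real.rpow_le_one_of_one_le_of_nonpos hv1 (by linarith)
        _ ≤ (2:ℝ) ^ (β*s) := Real.one_le_rpow one_le_two (by linarith)
    · obtain ⟨m, hm⟩ : ∃ m, Nat.find (hex τ) = m + 1 :=
        ⟨Nat.find (hex τ) - 1, by omega⟩
      have hgt : ¬ (δ⁻¹ * |τ - σ| ≤ 2 ^ m) := Nat.find_min (hex τ) (by omega)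
      push_neg at hgt
      have h2v : (2:ℝ) ^ m ≤ 1 + δ⁻¹ * |τ - σ| := by linarith
      rw [hm]
      calc (1 + δ⁻¹ * |τ - σ|) ^ (-(β*s)) ≤ ((2:ℝ) ^ m) ^ (-(β*s)) :=
            Real.rpow_le_rpow_of_nonpos (by positivity) h2v (by linarith)
        _ = (2:ℝ) ^ ((m:ℝ) * (-(β*s))) := by
            rw [← Real.rpow_natCast 2 m, ← Real.rpow_mul (by norm_num)]
        _ = (2:ℝ) ^ (β*s) * ((2:ℝ) ^ (-(β*s))) ^ (m+1) := by
            rw [← Real.rpow_natCast ((2:ℝ) ^ (-(β*s))) (m+1),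
              ← Real.rpow_mul (by norm_num : (0:ℝ) ≤ 2), ← Real.rpow_add two_pos]
            congr 1
            push_cast
            ring
  -- annulus counting
  have hann : ∀ k : ℕ, ((Ej ∩ G k).encard : ℝ≥0∞) ≤ 4 * C2 * C2 ^ k * assouadChar α E := by
    intro k
    have h2k : (1:ℝ) ≤ 2 ^ k := one_le_pow₀ one_le_two
    have hsub2 : Ej ∩ G k ⊆ Ej ∩ Set.Icc (σ - 2^k*δ) (σ + 2^k*δ) := by
      rintro τ ⟨hτE, hτG⟩
      refine ⟨hτE, ?_⟩
      have hP : δ⁻¹ * |τ - σ| ≤ 2 ^ k := by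
        have hspec := Nat.find_spec (hex τ)
        have : Nat.find (hex τ) = k := hτG
        rwa [this] at hspec
      have habs : |τ - σ| ≤ 2^k * δ := by
        have h1 : |τ - σ| = δ * (δ⁻¹ * |τ - σ|) := by field_simp
        rw [h1, mul_comm ((2:ℝ)^k) δ]
        exact mul_le_mul_of_nonneg_left hP hδ.le
      rw [Set.mem_Icc]
      have := abs_le.mp habs
      constructor <;> linarith [this.1, this.2]
    have hfrac : ((σ + 2^k*δ) - (σ - 2^k*δ)) / δ = 2 * 2^k := by
      field_simp
      ring
    have hlen : δ ≤ (σ + 2^k*δ) - (σ - 2^k*δ) := by nlinarith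
    calc ((Ej ∩ G k).encard : ℝ≥0∞)
        ≤ ((Ej ∩ Set.Icc (σ - 2^k*δ) (σ + 2^k*δ)).encard : ℝ≥0∞) := by
          exact_mod_cast ENat.toENNReal_le.mpr (Set.encard_mono hsub2)
      _ ≤ 4 * ENNReal.ofReal ((((σ + 2^k*δ) - (σ - 2^k*δ)) / δ) ^ α) * assouadChar α E :=
          aux_count α hα0 E hEA δ _ _ hδ hlen Ej hEjE hsep
      _ = 4 * C2 * C2 ^ k * assouadChar α E := by
          rw [hfrac]
          have h2 : ((2:ℝ) * 2^k) ^ α = ((2:ℝ)^α) ^ (k+1) := by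
            have he : (2:ℝ) * 2^k = 2 ^ (k+1) := by ring
            rw [he, ← Real.rpow_natCast 2 (k+1), ← Real.rpow_mul (by norm_num),
              ← Real.rpow_natCast ((2:ℝ)^α) (k+1), ← Real.rpow_mul (by norm_num : (0:ℝ) ≤ 2)]
            congr 1
            ring
          have h3 : ENNReal.ofReal (((2:ℝ) * 2^k) ^ α) = C2 * C2 ^ k := by
            rw [h2, ENNReal.ofReal_pow (by positivity), hC2def, pow_succ, mul_comm]
          rw [h3]
          ring
  -- sum up
  calc ∑' τ : Ej, (ENNReal.ofReal ((1 + δ⁻¹ * |(τ:ℝ) - σ|) ^ (-β))) ^ s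
      ≤ ∑' τ : Ej, ∑' k : ℕ, (c * q2 ^ k) * (G k).indicator (fun _ => (1:ℝ≥0∞)) ↑τ :=
        ENNReal.tsum_le_tsum (fun τ => hpt τ)
    _ = ∑' k : ℕ, ∑' τ : Ej, (c * q2 ^ k) * (G k).indicator (fun _ => (1:ℝ≥0∞)) ↑τ :=
        ENNReal.tsum_comm
    _ = ∑' k : ℕ, (c * q2 ^ k) * ((Ej ∩ G k).encard : ℝ≥0∞) := by
        refine tsum_congr fun k => ?_
        rw [ENNReal.tsum_mul_left]
        congr 1
        rw [tsum_subtype, Set.indicator_indicator, ← tsum_subtype]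
        exact ENNReal.tsum_set_one _
    _ ≤ ∑' k : ℕ, (c * q2 ^ k) * (4 * C2 * C2 ^ k * assouadChar α E) :=
        ENNReal.tsum_le_tsum (fun k => mul_le_mul_right (hann k) _)
    _ = ∑' k : ℕ, (4 * c * C2 * assouadChar α E) * (q2 * C2) ^ k := by
        refine tsum_congr fun k => ?_
        rw [mul_pow]
        ring
    _ = (4 * c * C2 * assouadChar α E) * (1 - (q2 * C2))⁻¹ := by
        rw [ENNReal.tsum_mul_left, ENNReal.tsum_geometric]
    _ = 4 * c * C2 * (1 - q)⁻¹ * assouadChar α E := by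
        have hqq : q2 * C2 = q := by
          rw [hq2def, hC2def, hqdef, ← ENNReal.ofReal_mul (by positivity),
            ← Real.rpow_add two_pos]
          congr 1
          ring
        rw [hqq]
        ring

lemma aux_weak (α s β : ℝ) (hα0 : 0 < α) (hα1 : α ≤ 1) (hs : 1 ≤ s) (hβ0 : 0 < β)
    (hcrit : β * s = α) (E : Set ℝ) (hEA : assouadChar α E ≠ ∞)
    (δ : ℝ) (hδ : 0 < δ) (Ej : Set ℝ) (hsub : Ej ⊆ E)
    (hsep : ∀ τ ∈ Ej, ∀ τ' ∈ Ej, τ ≠ τ' → δ ≤ |τ - τ'|) (σ : ℝ) :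
    weakLqNorm s Ej (fun τ => ENNReal.ofReal ((1 + δ⁻¹ * |τ - σ|) ^ (-β)))
      ≤ 8 * assouadChar α E ^ (1/s) := by
  have hspos : 0 < s := lt_of_lt_of_le one_pos hs
  rw [weakLqNorm]
  refine iSup_le fun l => iSup_le fun hl => ?_
  rcases le_or_gt 1 l with hl1 | hl1
  · have hempty :
        {τ ∈ Ej | ENNReal.ofReal l < ENNReal.ofReal ((1 + δ⁻¹ * |τ - σ|) ^ (-β))} = ∅ := by
      ext τ
      simp only [Set.mem_sep_iff, Set.mem_empty_iff_false, iff_false, not_and]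
      intro _
      rw [not_lt]
      refine ENNReal.ofReal_le_ofReal (le_trans ?_ hl1)
      exact Real.rpow_le_one_of_one_le_of_nonpos
        (le_add_of_nonneg_right (by positivity)) (by linarith)
    rw [hempty, Set.encard_empty]
    rw [show (((0:ℕ∞)):ℝ≥0∞) = 0 from ENat.toENNReal_zero, ENNReal.zero_rpow_of_pos (by positivity : (0:ℝ) < 1/s),
      mul_zero]
    exact zero_le
  · set R := (l⁻¹) ^ (1/β) with hRdef
    have hlinv : 1 < l⁻¹ := (one_lt_inv₀ hl).mpr hl1
    have hR1 : (1:ℝ) ≤ R := Real.one_le_rpow hlinv.le (by positivity)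
    have hTsub : {τ ∈ Ej | ENNReal.ofReal l < ENNReal.ofReal ((1 + δ⁻¹ * |τ - σ|) ^ (-β))}
        ⊆ Ej ∩ Set.Icc (σ - R*δ) (σ + R*δ) := by
      rintro τ ⟨hτE, hlt'⟩
      refine ⟨hτE, ?_⟩
      have hu0 : 0 ≤ δ⁻¹ * |τ - σ| := by positivity
      have hv0 : (0:ℝ) < 1 + δ⁻¹ * |τ - σ| := by linarith
      have hx : l < (1 + δ⁻¹ * |τ - σ|) ^ (-β) :=
        (ENNReal.ofReal_lt_ofReal_iff_of_nonneg hl.le).mp hlt'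
      have hposβ : 0 < (1 + δ⁻¹ * |τ - σ|) ^ β := Real.rpow_pos_of_pos hv0 β
      have hvβ : (1 + δ⁻¹ * |τ - σ|) ^ β < l⁻¹ := by
        rw [Real.rpow_neg hv0.le] at hx
        have h2 : l * (1 + δ⁻¹ * |τ - σ|) ^ β < 1 := by
          calc l * (1 + δ⁻¹ * |τ - σ|) ^ β
              < ((1 + δ⁻¹ * |τ - σ|) ^ β)⁻¹ * (1 + δ⁻¹ * |τ - σ|) ^ β :=
                mul_lt_mul_of_pos_right hx hposβ
            _ = 1 := inv_mul_cancel₀ hposβ.ne'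
        calc (1 + δ⁻¹ * |τ - σ|) ^ β = l⁻¹ * (l * (1 + δ⁻¹ * |τ - σ|) ^ β) := by field_simp
          _ < l⁻¹ * 1 := mul_lt_mul_of_pos_left h2 (inv_pos.mpr hl)
          _ = l⁻¹ := mul_one _
      have hvR : 1 + δ⁻¹ * |τ - σ| < R := by
        have h3 : ((1 + δ⁻¹ * |τ - σ|) ^ β) ^ (1/β) < (l⁻¹) ^ (1/β) :=
          Real.rpow_lt_rpow (by positivity) hvβ (by positivity)
        rwa [← Real.rpow_mul hv0.le, mul_one_div, div_self hβ0.ne', Real.rpow_one] at h3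
      have habs : |τ - σ| ≤ R * δ := by
        have h4 : δ⁻¹ * |τ - σ| ≤ R := by linarith
        calc |τ - σ| = δ * (δ⁻¹ * |τ - σ|) := by field_simp
          _ ≤ δ * R := mul_le_mul_of_nonneg_left h4 hδ.le
          _ = R * δ := mul_comm _ _
      rw [Set.mem_Icc]
      have h5 := abs_le.mp habs
      constructor <;> linarith [h5.1, h5.2]
    have hlen : δ ≤ (σ + R*δ) - (σ - R*δ) := by nlinarith
    have hfrac : ((σ + R*δ) - (σ - R*δ)) / δ = 2 * R := by field_simp; ring
    have hcount := aux_count α hα0 E hEA δ (σ - R*δ) (σ + R*δ) hδ hlen Ej hsub hsep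
    rw [hfrac] at hcount
    have hRα : ((2:ℝ) * R) ^ α = 2 ^ α * (l⁻¹) ^ s := by
      rw [Real.mul_rpow (by norm_num) (by positivity), hRdef,
        ← Real.rpow_mul (by positivity : (0:ℝ) ≤ l⁻¹)]
      congr 2
      field_simp
      linarith [hcrit]
    have hEnc : (({τ ∈ Ej | ENNReal.ofReal l < ENNReal.ofReal ((1 + δ⁻¹ * |τ - σ|) ^ (-β))}.encard : ℝ≥0∞))
        ≤ 4 * (ENNReal.ofReal ((2:ℝ)^α) * ENNReal.ofReal ((l⁻¹)^s)) * assouadChar α E := by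
      have h6 : (({τ ∈ Ej | ENNReal.ofReal l < ENNReal.ofReal ((1 + δ⁻¹ * |τ - σ|) ^ (-β))}.encard : ℝ≥0∞))
          ≤ ((Ej ∩ Set.Icc (σ - R*δ) (σ + R*δ)).encard : ℝ≥0∞) := by
        exact_mod_cast ENat.toENNReal_le.mpr (Set.encard_mono hTsub)
      refine le_trans h6 (le_trans hcount ?_)
      rw [← ENNReal.ofReal_mul (by positivity : (0:ℝ) ≤ (2:ℝ)^α), ← hRα]
    have hp1 : (0:ℝ) ≤ 1/s := by positivity
    have hYp : (ENNReal.ofReal ((l⁻¹)^s)) ^ (1/s) = ENNReal.ofReal l⁻¹ := by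
      rw [ENNReal.ofReal_rpow_of_pos (by positivity),
        ← Real.rpow_mul (by positivity : (0:ℝ) ≤ l⁻¹), mul_one_div, div_self hspos.ne',
        Real.rpow_one]
    have h4p : (4:ℝ≥0∞) ^ (1/s) ≤ 4 := by
      calc (4:ℝ≥0∞) ^ (1/s) ≤ (4:ℝ≥0∞) ^ (1:ℝ) :=
            ENNReal.rpow_le_rpow_of_exponent_le (by norm_num) ((div_le_one hspos).mpr hs)
        _ = 4 := ENNReal.rpow_one 4
    have hXp : (ENNReal.ofReal ((2:ℝ)^α)) ^ (1/s) ≤ 2 := by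
      have hX2 : ENNReal.ofReal ((2:ℝ)^α) ≤ 2 := by
        rw [show (2:ℝ≥0∞) = ENNReal.ofReal 2 by simp]
        refine ENNReal.ofReal_le_ofReal ?_
        calc (2:ℝ)^α ≤ (2:ℝ)^(1:ℝ) := Real.rpow_le_rpow_of_exponent_le one_le_two hα1
          _ = 2 := Real.rpow_one 2
      calc (ENNReal.ofReal ((2:ℝ)^α)) ^ (1/s) ≤ (ENNReal.ofReal ((2:ℝ)^α)) ^ (1:ℝ) :=
            ENNReal.rpow_le_rpow_of_exponent_le
              (ENNReal.one_le_ofReal.mpr (Real.one_le_rpow one_le_two hα0.le))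
              ((div_le_one hspos).mpr hs)
        _ = ENNReal.ofReal ((2:ℝ)^α) := ENNReal.rpow_one _
        _ ≤ 2 := hX2
    have hll : ENNReal.ofReal l * ENNReal.ofReal l⁻¹ = 1 := by
      rw [← ENNReal.ofReal_mul hl.le, mul_inv_cancel₀ hl.ne', ENNReal.ofReal_one]
    calc ENNReal.ofReal l *
          (({τ ∈ Ej | ENNReal.ofReal l < ENNReal.ofReal ((1 + δ⁻¹ * |τ - σ|) ^ (-β))}.encard : ℝ≥0∞)) ^ (1/s)
        ≤ ENNReal.ofReal l *
          ((4 * (ENNReal.ofReal ((2:ℝ)^α) * ENNReal.ofReal ((l⁻¹)^s)) * assouadChar α E) ^ (1/s)) :=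
          mul_le_mul_right (ENNReal.rpow_le_rpow hEnc hp1) _
      _ = ENNReal.ofReal l * ((4:ℝ≥0∞)^(1/s) * ((ENNReal.ofReal ((2:ℝ)^α))^(1/s) *
            (ENNReal.ofReal ((l⁻¹)^s))^(1/s)) * assouadChar α E ^ (1/s)) := by
          rw [ENNReal.mul_rpow_of_nonneg _ _ hp1, ENNReal.mul_rpow_of_nonneg _ _ hp1,
            ENNReal.mul_rpow_of_nonneg _ _ hp1]
      _ = ((4:ℝ≥0∞)^(1/s) * (ENNReal.ofReal ((2:ℝ)^α))^(1/s)) *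
            (ENNReal.ofReal l * ENNReal.ofReal l⁻¹) * assouadChar α E ^ (1/s) := by
          rw [hYp]; ring
      _ ≤ (4 * 2) * 1 * assouadChar α E ^ (1/s) := by
          refine mul_le_mul' (mul_le_mul' (mul_le_mul' h4p hXp) hll.le) le_rfl
      _ = 8 * assouadChar α E ^ (1/s) := by norm_num

theorem dispersive_kernel_lq_bounds
    (d : ℕ) (hd : 1 ≤ d) (γ : ℝ) (hγ : 0 < γ) (hγ1 : γ ≠ 1)
    (α : ℝ) (hα : α ∈ Set.Ioc (0:ℝ) 1) (r : ℝ) (hr : 2 < r)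
    (E : Set ℝ) (hEA : assouadChar α E ≠ ∞) (sexp : ℝ) (hsexp : 1 ≤ sexp) :
    ((α / sexp < (d : ℝ) * (1 / 2 - 1 / r)) →
      ∃ C : ℝ, 0 < C ∧ ∀ (j : ℤ) (Ej : Set ℝ),
        IsMaxSepSubset ((2:ℝ) ^ (-(γ * j))) Ej E →
        (∀ τ' ∈ Ej,
          lqNorm (ENNReal.ofReal sexp) Ej (fun τ =>
            ENNReal.ofReal ((1 + (2:ℝ) ^ (γ * (j:ℝ)) * |τ - τ'|) ^ (-((d:ℝ) * (1 / 2 - 1 / r)))))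
            ≤ ENNReal.ofReal C * assouadChar α E ^ (1 / sexp)) ∧
        (∀ τ ∈ Ej,
          lqNorm (ENNReal.ofReal sexp) Ej (fun τ' =>
            ENNReal.ofReal ((1 + (2:ℝ) ^ (γ * (j:ℝ)) * |τ - τ'|) ^ (-((d:ℝ) * (1 / 2 - 1 / r)))))
            ≤ ENNReal.ofReal C * assouadChar α E ^ (1 / sexp))) ∧
    (((d : ℝ) * (1 / 2 - 1 / r) = α / sexp) →
      ∃ C : ℝ, 0 < C ∧ ∀ (j : ℤ) (Ej : Set ℝ),
        IsMaxSepSubset ((2:ℝ) ^ (-(γ * j))) Ej E →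
        (∀ τ' ∈ Ej,
          weakLqNorm sexp Ej (fun τ =>
            ENNReal.ofReal ((1 + (2:ℝ) ^ (γ * (j:ℝ)) * |τ - τ'|) ^ (-((d:ℝ) * (1 / 2 - 1 / r)))))
            ≤ ENNReal.ofReal C * assouadChar α E ^ (1 / sexp)) ∧
        (∀ τ ∈ Ej,
          weakLqNorm sexp Ej (fun τ' =>
            ENNReal.ofReal ((1 + (2:ℝ) ^ (γ * (j:ℝ)) * |τ - τ'|) ^ (-((d:ℝ) * (1 / 2 - 1 / r)))))
            ≤ ENNReal.ofReal C * assouadChar α E ^ (1 / sexp))) := by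
  have hspos : (0:ℝ) < sexp := lt_of_lt_of_le one_pos hsexp
  have hd1 : (1:ℝ) ≤ (d:ℝ) := by exact_mod_cast hd
  have h2r : 1/r < 1/2 := by
    rw [div_lt_div_iff₀ (by linarith) (by norm_num)]
    linarith
  have hβ0 : 0 < (d:ℝ) * (1/2 - 1/r) := by nlinarith
  constructor
  · -- strong case
    intro hlt
    have hβs : α < ((d:ℝ) * (1/2 - 1/r)) * sexp := by
      rw [div_lt_iff₀ hspos] at hlt
      linarith
    obtain ⟨M, hMtop, hM⟩ := aux_strong α sexp ((d:ℝ) * (1/2 - 1/r))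
      hα.1 hα.2 hsexp hβ0 hβs E hEA
    have hMp : M ^ (1/sexp) ≠ ∞ := ENNReal.rpow_ne_top_of_nonneg (by positivity) hMtop
    refine ⟨(M ^ (1/sexp)).toReal + 1, by positivity, ?_⟩
    intro j Ej hEj
    have hδ : (0:ℝ) < (2:ℝ) ^ (-(γ * (j:ℝ))) := Real.rpow_pos_of_pos two_pos _
    have hinv : (2:ℝ) ^ (γ * (j:ℝ)) = ((2:ℝ) ^ (-(γ * (j:ℝ))))⁻¹ := by
      rw [← Real.rpow_neg (by norm_num : (0:ℝ) ≤ 2), neg_neg]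
    have hnorm : ∀ (f : ℝ → ℝ≥0∞), lqNorm (ENNReal.ofReal sexp) Ej f
        = (∑' τ : Ej, f ↑τ ^ sexp) ^ (1/sexp) := by
      intro f
      rw [lqNorm, if_neg ENNReal.ofReal_ne_top, ENNReal.toReal_ofReal (by linarith)]
    have hfin : ∀ (g : ℝ → ℝ) (key : ∑' τ : Ej, (ENNReal.ofReal (g ↑τ)) ^ sexp
          ≤ M * assouadChar α E),
        (∑' τ : Ej, (ENNReal.ofReal (g ↑τ)) ^ sexp) ^ (1/sexp)
          ≤ ENNReal.ofReal ((M ^ (1/sexp)).toReal + 1) * assouadChar α E ^ (1/sexp) := by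
      intro g key
      calc (∑' τ : Ej, (ENNReal.ofReal (g ↑τ)) ^ sexp) ^ (1/sexp)
          ≤ (M * assouadChar α E) ^ (1/sexp) := ENNReal.rpow_le_rpow key (by positivity)
        _ = M ^ (1/sexp) * assouadChar α E ^ (1/sexp) :=
            ENNReal.mul_rpow_of_nonneg _ _ (by positivity)
        _ ≤ ENNReal.ofReal ((M ^ (1/sexp)).toReal + 1) * assouadChar α E ^ (1/sexp) := by
            refine mul_le_mul_left ?_ _
            calc M ^ (1/sexp) = ENNReal.ofReal ((M ^ (1/sexp)).toReal) :=
                  (ENNReal.ofReal_toReal hMp).symm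
              _ ≤ ENNReal.ofReal ((M ^ (1/sexp)).toReal + 1) :=
                  ENNReal.ofReal_le_ofReal (by linarith)
    constructor
    · intro τ' hτ'
      rw [hnorm, hinv]
      exact hfin (fun t => (1 + ((2:ℝ) ^ (-(γ * (j:ℝ))))⁻¹ * |t - τ'|)
        ^ (-((d:ℝ) * (1 / 2 - 1 / r)))) (hM _ hδ Ej hEj.1.1 hEj.1.2 τ')
    · intro τ hτ
      rw [hnorm, hinv]
      have hts : ∑' (τ'' : Ej), (ENNReal.ofReal ((1 + ((2:ℝ) ^ (-(γ * (j:ℝ))))⁻¹ * |τ - (τ'':ℝ)|)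
            ^ (-((d:ℝ) * (1 / 2 - 1 / r))))) ^ sexp
          = ∑' (τ'' : Ej), (ENNReal.ofReal ((1 + ((2:ℝ) ^ (-(γ * (j:ℝ))))⁻¹ * |(τ'':ℝ) - τ|)
            ^ (-((d:ℝ) * (1 / 2 - 1 / r))))) ^ sexp :=
        tsum_congr (fun τ'' => by rw [abs_sub_comm])
      rw [hts]
      exact hfin (fun t => (1 + ((2:ℝ) ^ (-(γ * (j:ℝ))))⁻¹ * |t - τ|)
        ^ (-((d:ℝ) * (1 / 2 - 1 / r)))) (hM _ hδ Ej hEj.1.1 hEj.1.2 τ)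
  · -- weak case
    intro heq
    have hcrit : ((d:ℝ) * (1/2 - 1/r)) * sexp = α := by
      rw [heq]
      field_simp
    refine ⟨8, by norm_num, ?_⟩
    intro j Ej hEj
    have hδ : (0:ℝ) < (2:ℝ) ^ (-(γ * (j:ℝ))) := Real.rpow_pos_of_pos two_pos _
    have hinv : (2:ℝ) ^ (γ * (j:ℝ)) = ((2:ℝ) ^ (-(γ * (j:ℝ))))⁻¹ := by
      rw [← Real.rpow_neg (by norm_num : (0:ℝ) ≤ 2), neg_neg]
    have h8 : ENNReal.ofReal (8:ℝ) = 8 := by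
      rw [show (8:ℝ≥0∞) = ENNReal.ofReal 8 by simp]
    constructor
    · intro τ' hτ'
      rw [hinv, h8]
      exact aux_weak α sexp _ hα.1 hα.2 hsexp hβ0 hcrit E hEA _ hδ Ej hEj.1.1 hEj.1.2 τ'
    · intro τ hτ
      rw [hinv, h8]
      have hfun : (fun τ'' => ENNReal.ofReal ((1 + ((2:ℝ) ^ (-(γ * (j:ℝ))))⁻¹ * |τ - τ''|)
            ^ (-((d:ℝ) * (1 / 2 - 1 / r)))))
          = (fun τ'' => ENNReal.ofReal ((1 + ((2:ℝ) ^ (-(γ * (j:ℝ))))⁻¹ * |τ'' - τ|)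
            ^ (-((d:ℝ) * (1 / 2 - 1 / r))))) := by
        funext u
        rw [abs_sub_comm]
      rw [hfun]
      exact aux_weak α sexp _ hα.1 hα.2 hsexp hβ0 hcrit E hEA _ hδ Ej hEj.1.1 hEj.1.2 τ


end
end

section
/- Let d ≥ 1 be an integer, γ > 0, α ∈ (0,1], r > 2, and j ∈ ℤ, and define 𝓚_r(t,s) = (1 + 2^{γj}|t−s|)^{−d(1/2 − 1/r)} for t, s ∈ ℝ. Let μ be a positive Borel measure on ℝ satisfying the α-dimensional growth condition. (i) If d(1/2 − 1/r) > α/σ for some σ ∈ [1,∞), then sup_{s∈ℝ} ‖𝓚_r(·, s)‖_{L^σ(dμ)} ≤ C ⟨μ⟩_α^{1/σ} 2^{−γα j/σ} and sup_{t∈ℝ} ‖𝓚_r(t, ·)‖_{L^σ(dμ)} ≤ C ⟨μ⟩_α^{1/σ} 2^{−γα j/σ}, with C independent of j. (ii) If d(1/2 − 1/r) = α/σ, then the corresponding bounds hold with the weak-L^{σ,∞}(dμ) quasinorm in place of the L^σ(dμ) norm, with C independent of j. -/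
open MeasureTheory Complex Set Metric
open scoped ENNReal NNReal Classical

noncomputable section

lemma growth_bound (α : ℝ) (μ : Measure ℝ) (s ρ : ℝ) (hρ : 0 < ρ) :
    μ (Set.Ioo (s - ρ) (s + ρ)) ≤ growthConst α μ * ENNReal.ofReal (ρ ^ α) := by
  have h : μ (Set.Ioo (s - ρ) (s + ρ)) / ENNReal.ofReal (ρ ^ α) ≤ growthConst α μ := by
    refine le_trans ?_ (le_iSup _ s)
    refine le_trans ?_ (le_iSup _ ρ)
    exact le_iSup (fun _ : 0 < ρ => μ (Set.Ioo (s - ρ) (s + ρ)) / ENNReal.ofReal (ρ ^ α)) hρ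
  rwa [ENNReal.div_le_iff_le_mul (Or.inl (by positivity)) (Or.inl ENNReal.ofReal_ne_top)] at h

lemma level_subset {q γ : ℝ} (hq : 0 < q) (j : ℤ) {c l : ℝ} (hl : 0 < l) :
    {x : ℝ | l < (1 + (2:ℝ) ^ (γ * (j:ℝ)) * |x - c|) ^ (-q)} ⊆
      Set.Ioo (c - l ^ (-(1/q)) * (2:ℝ) ^ (-(γ * (j:ℝ)))) (c + l ^ (-(1/q)) * (2:ℝ) ^ (-(γ * (j:ℝ)))) := by
  intro x hx
  simp only [mem_setOf_eq] at hx
  set u : ℝ := (2:ℝ) ^ (γ * (j:ℝ)) * |x - c| with hu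
  have hu0 : 0 ≤ u := by positivity
  have h1u : (0:ℝ) < 1 + u := by linarith
  have key : 1 + u < l ^ (-(1/q)) := by
    have h2 := Real.rpow_lt_rpow_of_neg hl hx (neg_lt_zero.mpr (by positivity : (0:ℝ) < 1/q))
    rw [← Real.rpow_mul h1u.le] at h2
    have he : -q * -(1/q) = 1 := by field_simp
    rwa [he, Real.rpow_one] at h2
  have h2 : (0:ℝ) < (2:ℝ) ^ (γ * (j:ℝ)) := by positivity
  have habs : |x - c| < l ^ (-(1/q)) * (2:ℝ) ^ (-(γ * (j:ℝ))) := by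
    rw [Real.rpow_neg (by norm_num : (0:ℝ) ≤ 2), ← div_eq_mul_inv, lt_div_iff₀ h2,
      mul_comm (|x - c|)]
    calc u ≤ 1 + u - 1 := by linarith
    _ < l ^ (-(1/q)) - 1 := by linarith
    _ ≤ l ^ (-(1/q)) := by linarith
  have := abs_lt.mp habs
  exact ⟨by linarith [this.1], by linarith [this.2]⟩

lemma level_meas (α : ℝ) (μ : Measure ℝ) {q γ : ℝ} (hq : 0 < q) (j : ℤ) {c l : ℝ} (hl : 0 < l) :
    μ {x : ℝ | l < (1 + (2:ℝ) ^ (γ * (j:ℝ)) * |x - c|) ^ (-q)} ≤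
      growthConst α μ * ENNReal.ofReal ((l ^ (-(1/q)) * (2:ℝ) ^ (-(γ * (j:ℝ)))) ^ α) :=
  le_trans (measure_mono (level_subset hq j hl))
    (growth_bound α μ c _ (by positivity))

lemma level_empty {q γ : ℝ} (hq : 0 < q) (j : ℤ) {c l : ℝ} (hl : 1 ≤ l) :
    {x : ℝ | l < (1 + (2:ℝ) ^ (γ * (j:ℝ)) * |x - c|) ^ (-q)} = ∅ := by
  refine eq_empty_iff_forall_notMem.mpr fun x hx => ?_
  simp only [mem_setOf_eq] at hx
  have hb : (1:ℝ) ≤ 1 + (2:ℝ) ^ (γ * (j:ℝ)) * |x - c| := le_add_of_nonneg_right (by positivity)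
  have h1 : (1 + (2:ℝ) ^ (γ * (j:ℝ)) * |x - c|) ^ (-q) ≤ 1 :=
    Real.rpow_le_one_of_one_le_of_nonpos hb (by linarith)
  linarith

lemma rho_pow (l : ℝ) (hl : 0 < l) (q γ jr α : ℝ) :
    (l ^ (-(1/q)) * (2:ℝ) ^ (-(γ * jr))) ^ α
      = l ^ (-(α/q)) * (2:ℝ) ^ (-(γ * jr * α)) := by
  rw [Real.mul_rpow (by positivity) (by positivity), ← Real.rpow_mul hl.le,
    ← Real.rpow_mul (by norm_num : (0:ℝ) ≤ 2)]
  ring_nf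

lemma weak_bound_aux {α σ γ q : ℝ} (hα : 0 < α) (hσ : 1 ≤ σ) (hq : 0 < q)
    (hqs : q * σ = α) (μ : Measure ℝ) (j : ℤ) (c : ℝ) :
    (⨆ (l : ℝ) (_ : 0 < l), ENNReal.ofReal l *
        μ {x : ℝ | l < (1 + (2:ℝ) ^ (γ * (j:ℝ)) * |x - c|) ^ (-q)} ^ (1 / σ))
      ≤ ENNReal.ofReal 1 * growthConst α μ ^ (1 / σ) *
          ENNReal.ofReal ((2:ℝ) ^ (-(γ * α * (j:ℝ)) / σ)) := by
  have hσ0 : (0:ℝ) < σ := by linarith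
  refine iSup_le fun l => iSup_le fun hl => ?_
  have hρ : (0:ℝ) < l ^ (-(1/q)) * (2:ℝ) ^ (-(γ * (j:ℝ))) := by positivity
  have key := level_meas α μ (γ := γ) hq j (c := c) hl
  calc ENNReal.ofReal l * μ {x : ℝ | l < (1 + (2:ℝ) ^ (γ * (j:ℝ)) * |x - c|) ^ (-q)} ^ (1/σ)
      ≤ ENNReal.ofReal l *
        (growthConst α μ * ENNReal.ofReal ((l ^ (-(1/q)) * (2:ℝ) ^ (-(γ * (j:ℝ)))) ^ α)) ^ (1/σ) :=
        mul_le_mul_right (ENNReal.rpow_le_rpow key (by positivity)) _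
    _ = ENNReal.ofReal l * (growthConst α μ ^ (1/σ) *
          ENNReal.ofReal (((l ^ (-(1/q)) * (2:ℝ) ^ (-(γ * (j:ℝ)))) ^ α) ^ (1/σ))) := by
        rw [ENNReal.mul_rpow_of_nonneg _ _ (by positivity : (0:ℝ) ≤ 1/σ),
          ENNReal.ofReal_rpow_of_nonneg (by positivity) (by positivity)]
    _ = growthConst α μ ^ (1/σ) * ENNReal.ofReal ((2:ℝ) ^ (-(γ * α * (j:ℝ)) / σ)) := by
        have e1 : (((l ^ (-(1/q)) * (2:ℝ) ^ (-(γ * (j:ℝ)))) ^ α) ^ (1/σ))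
            = l⁻¹ * (2:ℝ) ^ (-(γ * α * (j:ℝ)) / σ) := by
          rw [rho_pow l hl q γ (j:ℝ) α, Real.mul_rpow (by positivity) (by positivity),
            ← Real.rpow_mul hl.le, ← Real.rpow_mul (by norm_num : (0:ℝ) ≤ 2)]
          have e2 : -(α/q) * (1/σ) = -1 := by
            field_simp
            linarith [hqs]
          rw [e2, Real.rpow_neg_one]
          congr 1
          ring
        rw [e1, ← mul_assoc, ENNReal.ofReal_mul (by positivity : (0:ℝ) ≤ l⁻¹)]
        have hcan : ENNReal.ofReal l * ENNReal.ofReal l⁻¹ = 1 := by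
          rw [← ENNReal.ofReal_mul hl.le, mul_inv_cancel₀ hl.ne', ENNReal.ofReal_one]
        calc ENNReal.ofReal l * growthConst α μ ^ (1/σ) *
              (ENNReal.ofReal l⁻¹ * ENNReal.ofReal ((2:ℝ) ^ (-(γ * α * (j:ℝ)) / σ)))
            = (ENNReal.ofReal l * ENNReal.ofReal l⁻¹) * (growthConst α μ ^ (1/σ) *
              ENNReal.ofReal ((2:ℝ) ^ (-(γ * α * (j:ℝ)) / σ))) := by ring
          _ = _ := by rw [hcan, one_mul]
    _ ≤ _ := by rw [ENNReal.ofReal_one, one_mul]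

lemma rpow_int_value {p : ℝ} (hp1 : -1 < p) (hp0 : p < 0) :
    ∫⁻ a in Ioo (0:ℝ) 1, ENNReal.ofReal (a ^ p) = ENNReal.ofReal ((p + 1)⁻¹) := by
  have hint : IntegrableOn (fun a : ℝ => a ^ p) (Ioo 0 1) :=
    (intervalIntegral.integrableOn_Ioo_rpow_iff one_pos).mpr hp1
  rw [← ofReal_integral_eq_lintegral_ofReal hint ?nn]
  case nn =>
    filter_upwards [ae_restrict_mem measurableSet_Ioo] with a ha
    exact Real.rpow_nonneg ha.1.le p
  congr 1
  rw [← integral_Ioc_eq_integral_Ioo, ← intervalIntegral.integral_of_le zero_le_one,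
    integral_rpow (Or.inl hp1)]
  rw [Real.one_rpow, Real.zero_rpow (by linarith)]
  rw [sub_zero, one_div]

lemma strong_bound_aux {α σ γ β : ℝ} (hα : 0 < α) (hσ : 1 ≤ σ) (hβ : 0 < β)
    (hαq : α < σ * β) (μ : Measure ℝ) (hμ : growthConst α μ ≠ ∞) (j : ℤ) (c : ℝ) :
    (∫⁻ x, ENNReal.ofReal ((1 + (2:ℝ) ^ (γ * (j:ℝ)) * |x - c|) ^ (-β)) ^ σ ∂μ) ^ (1/σ)
      ≤ ENNReal.ofReal (((1 - α/(σ*β))⁻¹) ^ (1/σ)) * growthConst α μ ^ (1/σ) *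
          ENNReal.ofReal ((2:ℝ) ^ (-(γ * α * (j:ℝ)) / σ)) := by
  have hσ0 : (0:ℝ) < σ := by linarith
  set q : ℝ := σ * β with hqdef
  have hq0 : (0:ℝ) < q := by positivity
  have hαq' : α / q < 1 := (div_lt_one hq0).mpr hαq
  have hαq0 : 0 < α / q := by positivity
  -- Step A : rewrite integrand
  have stepA : (∫⁻ x, ENNReal.ofReal ((1 + (2:ℝ) ^ (γ * (j:ℝ)) * |x - c|) ^ (-β)) ^ σ ∂μ)
      = ∫⁻ x, ENNReal.ofReal ((1 + (2:ℝ) ^ (γ * (j:ℝ)) * |x - c|) ^ (-q)) ∂μ := by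
    refine lintegral_congr fun x => ?_
    have hb : (0:ℝ) ≤ 1 + (2:ℝ) ^ (γ * (j:ℝ)) * |x - c| := by positivity
    rw [ENNReal.ofReal_rpow_of_nonneg (Real.rpow_nonneg hb _) hσ0.le,
      ← Real.rpow_mul hb]
    have he : -β * σ = -q := by rw [hqdef]; ring
    rw [he]
  -- Step B : layer cake
  have hmble : Measurable fun x : ℝ => (1 + (2:ℝ) ^ (γ * (j:ℝ)) * |x - c|) ^ (-q) := by
    apply Continuous.measurable
    refine Continuous.rpow_const ?_ fun x => Or.inl (by positivity)
    exact continuous_const.add (continuous_const.mul ((continuous_id.sub continuous_const).abs))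
  have stepB : (∫⁻ x, ENNReal.ofReal ((1 + (2:ℝ) ^ (γ * (j:ℝ)) * |x - c|) ^ (-q)) ∂μ)
      = ∫⁻ a in Ioi (0:ℝ), μ {x : ℝ | a < (1 + (2:ℝ) ^ (γ * (j:ℝ)) * |x - c|) ^ (-q)} :=
    lintegral_eq_lintegral_meas_lt μ
      (Filter.Eventually.of_forall fun x => Real.rpow_nonneg (by positivity) _)
      hmble.aemeasurable
  -- Step C : bound by indicator
  have stepC : (∫⁻ a in Ioi (0:ℝ), μ {x : ℝ | a < (1 + (2:ℝ) ^ (γ * (j:ℝ)) * |x - c|) ^ (-q)})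
      ≤ ∫⁻ a in Ioi (0:ℝ), (Ioo (0:ℝ) 1).indicator
          (fun a => (growthConst α μ * ENNReal.ofReal ((2:ℝ) ^ (-(γ * (j:ℝ) * α)))) *
            ENNReal.ofReal (a ^ (-(α/q)))) a := by
    refine setLIntegral_mono' measurableSet_Ioi fun a ha => ?_
    rw [mem_Ioi] at ha
    by_cases ha1 : a < 1
    · rw [Set.indicator_of_mem (show a ∈ Ioo (0:ℝ) 1 from ⟨ha, ha1⟩)]
      refine le_trans (level_meas α μ (γ := γ) hq0 j (c := c) ha) ?_
      rw [rho_pow a ha q γ (j:ℝ) α, ENNReal.ofReal_mul (by positivity)]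
      calc growthConst α μ * (ENNReal.ofReal (a ^ (-(α/q))) *
            ENNReal.ofReal ((2:ℝ) ^ (-(γ * (j:ℝ) * α))))
          = (growthConst α μ * ENNReal.ofReal ((2:ℝ) ^ (-(γ * (j:ℝ) * α)))) *
            ENNReal.ofReal (a ^ (-(α/q))) := by ring
        _ ≤ _ := le_refl _
    · rw [level_empty hq0 j (le_of_not_gt ha1), measure_empty]
      exact zero_le
  -- Step D/E/F : compute the indicator integral
  have hKne : growthConst α μ * ENNReal.ofReal ((2:ℝ) ^ (-(γ * (j:ℝ) * α))) ≠ ∞ :=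
    ENNReal.mul_ne_top hμ ENNReal.ofReal_ne_top
  have stepD : (∫⁻ a in Ioi (0:ℝ), (Ioo (0:ℝ) 1).indicator
          (fun a => (growthConst α μ * ENNReal.ofReal ((2:ℝ) ^ (-(γ * (j:ℝ) * α)))) *
            ENNReal.ofReal (a ^ (-(α/q)))) a)
      = (growthConst α μ * ENNReal.ofReal ((2:ℝ) ^ (-(γ * (j:ℝ) * α)))) *
          ENNReal.ofReal ((-(α/q) + 1)⁻¹) := by
    rw [lintegral_indicator measurableSet_Ioo, Measure.restrict_restrict measurableSet_Ioo,
      inter_eq_left.mpr Ioo_subset_Ioi_self,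
      lintegral_const_mul' _ _ hKne, rpow_int_value (by linarith) (by linarith)]
  have h1σ : (0:ℝ) ≤ 1/σ := by positivity
  calc (∫⁻ x, ENNReal.ofReal ((1 + (2:ℝ) ^ (γ * (j:ℝ)) * |x - c|) ^ (-β)) ^ σ ∂μ) ^ (1/σ)
      ≤ ((growthConst α μ * ENNReal.ofReal ((2:ℝ) ^ (-(γ * (j:ℝ) * α)))) *
          ENNReal.ofReal ((-(α/q) + 1)⁻¹)) ^ (1/σ) := by
        refine ENNReal.rpow_le_rpow ?_ h1σ
        rw [stepA, stepB]
        exact le_trans stepC (le_of_eq stepD)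
    _ = ENNReal.ofReal (((1 - α/(σ*β))⁻¹) ^ (1/σ)) * growthConst α μ ^ (1/σ) *
          ENNReal.ofReal ((2:ℝ) ^ (-(γ * α * (j:ℝ)) / σ)) := by
        rw [ENNReal.mul_rpow_of_nonneg _ _ h1σ, ENNReal.mul_rpow_of_nonneg _ _ h1σ,
          ENNReal.ofReal_rpow_of_nonneg (by positivity) h1σ,
          ENNReal.ofReal_rpow_of_nonneg (inv_nonneg.mpr (by linarith : (0:ℝ) ≤ -(α/q) + 1)) h1σ]
        have e2 : ((2:ℝ) ^ (-(γ * (j:ℝ) * α))) ^ (1/σ) = (2:ℝ) ^ (-(γ * α * (j:ℝ)) / σ) := by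
          rw [← Real.rpow_mul (by norm_num : (0:ℝ) ≤ 2)]
          congr 1
          ring
        have e3 : ((-(α/q) + 1)⁻¹ : ℝ) = (1 - α/(σ*β))⁻¹ := by rw [hqdef]; ring_nf
        rw [e2, e3]
        ring

theorem dispersive_kernel_Lsigma_mu_bounds
    (d : ℕ) (hd : 1 ≤ d) (γ : ℝ) (hγ : 0 < γ)
    (α : ℝ) (hα : α ∈ Set.Ioc (0:ℝ) 1) (r : ℝ) (hr : 2 < r)
    (μ : Measure ℝ) (hμα : growthConst α μ ≠ ∞)
    (σ : ℝ) (hσ : 1 ≤ σ) :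
    ((α / σ < (d : ℝ) * (1 / 2 - 1 / r)) →
      ∃ C : ℝ, 0 < C ∧ ∀ (j : ℤ),
        (∀ s : ℝ,
          (∫⁻ t, ENNReal.ofReal
              ((1 + (2:ℝ) ^ (γ * (j:ℝ)) * |t - s|) ^ (-((d:ℝ) * (1 / 2 - 1 / r)))) ^ σ ∂μ)
              ^ (1 / σ)
            ≤ ENNReal.ofReal C * growthConst α μ ^ (1 / σ) *
                ENNReal.ofReal ((2:ℝ) ^ (-(γ * α * (j:ℝ)) / σ))) ∧
        (∀ t : ℝ,
          (∫⁻ s, ENNReal.ofReal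
              ((1 + (2:ℝ) ^ (γ * (j:ℝ)) * |t - s|) ^ (-((d:ℝ) * (1 / 2 - 1 / r)))) ^ σ ∂μ)
              ^ (1 / σ)
            ≤ ENNReal.ofReal C * growthConst α μ ^ (1 / σ) *
                ENNReal.ofReal ((2:ℝ) ^ (-(γ * α * (j:ℝ)) / σ)))) ∧
    (((d : ℝ) * (1 / 2 - 1 / r) = α / σ) →
      ∃ C : ℝ, 0 < C ∧ ∀ (j : ℤ),
        (∀ s : ℝ,
          (⨆ (l : ℝ) (_ : 0 < l), ENNReal.ofReal l *
              μ {t : ℝ | l < (1 + (2:ℝ) ^ (γ * (j:ℝ)) * |t - s|) ^ (-((d:ℝ) * (1 / 2 - 1 / r)))}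
                ^ (1 / σ))
            ≤ ENNReal.ofReal C * growthConst α μ ^ (1 / σ) *
                ENNReal.ofReal ((2:ℝ) ^ (-(γ * α * (j:ℝ)) / σ))) ∧
        (∀ t : ℝ,
          (⨆ (l : ℝ) (_ : 0 < l), ENNReal.ofReal l *
              μ {s : ℝ | l < (1 + (2:ℝ) ^ (γ * (j:ℝ)) * |t - s|) ^ (-((d:ℝ) * (1 / 2 - 1 / r)))}
                ^ (1 / σ))
            ≤ ENNReal.ofReal C * growthConst α μ ^ (1 / σ) *
                ENNReal.ofReal ((2:ℝ) ^ (-(γ * α * (j:ℝ)) / σ)))) := by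
  have hσ0 : (0:ℝ) < σ := by linarith
  have hd1 : (1:ℝ) ≤ (d:ℝ) := by exact_mod_cast hd
  have hr2 : (1:ℝ)/r < 1/2 := one_div_lt_one_div_of_lt (by norm_num) hr
  have hβ : (0:ℝ) < (d:ℝ) * (1/2 - 1/r) := mul_pos (by linarith) (by linarith)
  constructor
  · intro h
    have hαq : α < σ * ((d:ℝ) * (1/2 - 1/r)) := by
      have h2 : α < ((d:ℝ) * (1/2 - 1/r)) * σ := (div_lt_iff₀ hσ0).mp h
      linarith [mul_comm (((d:ℝ) * (1/2 - 1/r))) σ]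
    refine ⟨((1 - α/(σ*((d:ℝ) * (1/2 - 1/r))))⁻¹) ^ (1/σ), ?_, fun j => ?_⟩
    · apply Real.rpow_pos_of_pos
      have : α / (σ*((d:ℝ) * (1/2 - 1/r))) < 1 := (div_lt_one (by positivity)).mpr hαq
      have h2 : (0:ℝ) < 1 - α / (σ*((d:ℝ) * (1/2 - 1/r))) := by linarith
      positivity
    constructor
    · intro s
      exact strong_bound_aux hα.1 hσ hβ hαq μ hμα j s
    · intro t
      have h2 := strong_bound_aux (γ := γ) hα.1 hσ hβ hαq μ hμα j t
      rw [show (∫⁻ s, ENNReal.ofReal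
            ((1 + (2:ℝ) ^ (γ * (j:ℝ)) * |t - s|) ^ (-((d:ℝ) * (1 / 2 - 1 / r)))) ^ σ ∂μ)
          = ∫⁻ s, ENNReal.ofReal
            ((1 + (2:ℝ) ^ (γ * (j:ℝ)) * |s - t|) ^ (-((d:ℝ) * (1 / 2 - 1 / r)))) ^ σ ∂μ from
        lintegral_congr fun s => by rw [abs_sub_comm]]
      exact h2
  · intro h
    have hqs : ((d:ℝ) * (1/2 - 1/r)) * σ = α := by
      rw [h]
      field_simp
    refine ⟨1, one_pos, fun j => ?_⟩
    constructor
    · intro s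
      exact weak_bound_aux hα.1 hσ hβ hqs μ j s
    · intro t
      have hset : ∀ l : ℝ,
          {s : ℝ | l < (1 + (2:ℝ) ^ (γ * (j:ℝ)) * |t - s|) ^ (-((d:ℝ) * (1 / 2 - 1 / r)))}
          = {s : ℝ | l < (1 + (2:ℝ) ^ (γ * (j:ℝ)) * |s - t|) ^ (-((d:ℝ) * (1 / 2 - 1 / r)))} :=
        fun l => by ext s; simp only [mem_setOf_eq, abs_sub_comm t s]
      simp only [hset]
      exact weak_bound_aux (γ := γ) hα.1 hσ hβ hqs μ j t


end
end
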